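/- Let ρ_1 and ρ_2 be density matrices on ℂ² that are unambiguously distinguishable. Then both ρ_1 and ρ_2 are pure, i.e., each has rank 1. -/

import Mathlib

open Matrix Kronecker
open scoped ComplexOrder

noncomputable section

/-- A quantum operation on ℂ^d given by a finite family of Kraus operators
satisfying the completeness condition. -/
structure QuantumOp (d : ℕ) where
  m : ℕ
  K : Fin m → Matrix (Fin d) (Fin d) ℂ
  complete : ∑ k, (K k)ᴴ * K k = 1

/-- The support of a quantum operation: the span of its Kraus operators. -/
def QuantumOp.supp {d : ℕ} (E : QuantumOp d) : Submodule ℂ (Matrix (Fin d) (Fin d) ℂ) :=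
  Submodule.span ℂ (Set.range E.K)

/-- The output state (E ⊗ I)(|ψ⟩⟨ψ|) = Σ_k (E^k ⊗ I)|ψ⟩⟨ψ|(E^k ⊗ I)†. -/
def QuantumOp.output {d : ℕ} (E : QuantumOp d) (da : ℕ) (ψ : Fin d × Fin da → ℂ) :
    Matrix (Fin d × Fin da) (Fin d × Fin da) ℂ :=
  ∑ k, (E.K k ⊗ₖ (1 : Matrix (Fin da) (Fin da) ℂ)) * vecMulVec ψ (star ψ) *
    (E.K k ⊗ₖ (1 : Matrix (Fin da) (Fin da) ℂ))ᴴ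

/-- States σ_1, …, σ_n are unambiguously distinguishable if there is a POVM
{Π_0, Π_1, …, Π_n} with tr(Π_i σ_j) = 0 for i ≠ j and tr(Π_i σ_i) > 0. -/
def UnambiguouslyDistinguishable {μ : Type*} [Fintype μ] [DecidableEq μ] {n : ℕ}
    (σ : Fin n → Matrix μ μ ℂ) : Prop :=
  ∃ P0 : Matrix μ μ ℂ, ∃ P : Fin n → Matrix μ μ ℂ,
    P0.PosSemidef ∧ (∀ i, (P i).PosSemidef) ∧
    (P0 + ∑ i, P i = 1) ∧
    (∀ i j, i ≠ j → (P i * σ j).trace = 0) ∧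
    (∀ i, 0 < (P i * σ i).trace)

/-- Auxiliary: a complex matrix with `(Mᴴ * M).trace = 0` is zero. -/
lemma aux_trace_conjTranspose_mul_self_eq_zero {m n : Type*} [Fintype m] [Fintype n]
    {M : Matrix m n ℂ} (h : (Mᴴ * M).trace = 0) : M = 0 := by
  have hdiag : ∀ j, (Mᴴ * M) j j = 0 := by
    have := (Finset.sum_eq_zero_iff_of_nonneg (fun j _ =>
      Fintype.sum_nonneg (fun i => star_mul_self_nonneg (M i j)) :
        ∀ j ∈ Finset.univ, (0:ℂ) ≤ (Mᴴ * M) j j)).mp h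
    exact fun j => this j (Finset.mem_univ j)
  ext i j
  have : star (fun i => M i j) ⬝ᵥ (fun i => M i j) = 0 := hdiag j
  have := dotProduct_star_self_eq_zero.mp this
  exact congrFun this i

/-- Auxiliary: PSD matrices with zero trace of product multiply to zero. -/
lemma aux_psd_mul_eq_zero {n : Type*} [Fintype n] [DecidableEq n]
    {A B : Matrix n n ℂ} (hA : A.PosSemidef) (hB : B.PosSemidef)
    (h : (A * B).trace = 0) : A * B = 0 := by
  obtain ⟨C, rfl⟩ : ∃ C : Matrix n n ℂ, A = Cᴴ * C := by
    open scoped MatrixOrder in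
    obtain ⟨C, hC⟩ := CStarAlgebra.nonneg_iff_eq_star_mul_self.mp hA.nonneg
    exact ⟨C, hC⟩
  obtain ⟨D, rfl⟩ : ∃ D : Matrix n n ℂ, B = Dᴴ * D := by
    open scoped MatrixOrder in
    obtain ⟨D, hD⟩ := CStarAlgebra.nonneg_iff_eq_star_mul_self.mp hB.nonneg
    exact ⟨D, hD⟩
  have key : (C * Dᴴ) = 0 := by
    apply aux_trace_conjTranspose_mul_self_eq_zero
    have e1 : (C * Dᴴ)ᴴ * (C * Dᴴ) = D * (Cᴴ * (C * Dᴴ)) := by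
      rw [Matrix.conjTranspose_mul, Matrix.conjTranspose_conjTranspose, Matrix.mul_assoc]
    have e2 : Cᴴ * (C * Dᴴ) * D = Cᴴ * C * (Dᴴ * D) := by
      simp only [Matrix.mul_assoc]
    rw [e1, Matrix.trace_mul_comm, e2, h]
  calc Cᴴ * C * (Dᴴ * D) = Cᴴ * (C * Dᴴ) * D := by simp only [Matrix.mul_assoc]
  _ = 0 := by rw [key]; simp

/-- Auxiliary: a nonzero matrix over a field has positive rank. -/
lemma aux_rank_pos {m n : Type*} [Fintype m] [Fintype n] [DecidableEq n]
    {A : Matrix m n ℂ} (hA : A ≠ 0) : 0 < A.rank := by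
  rcases Nat.eq_zero_or_pos A.rank with h0 | h
  · exfalso
    apply hA
    have hb : LinearMap.range A.mulVecLin = ⊥ := Submodule.finrank_eq_zero.mp h0
    have hz : A.mulVecLin = 0 := LinearMap.range_eq_bot.mp hb
    ext i j
    have hv : A.mulVecLin (Pi.single j 1) = 0 := by rw [hz]; rfl
    have := congrFun hv i
    simpa [Matrix.mulVecLin_apply, Matrix.mulVec_single] using this
  · exact h

/-- if two qubit density matrices are unambiguously distinguishable, then
both are pure, i.e. of rank 1. -/
theorem unambig_qubit_states_pure (ρ₁ ρ₂ : Matrix (Fin 2) (Fin 2) ℂ)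
    (h₁ : ρ₁.PosSemidef) (h₂ : ρ₂.PosSemidef)
    (t₁ : ρ₁.trace = 1) (t₂ : ρ₂.trace = 1)
    (h : UnambiguouslyDistinguishable ![ρ₁, ρ₂]) :
    ρ₁.rank = 1 ∧ ρ₂.rank = 1 := by
  obtain ⟨P0, P, hP0, hP, hsum, hoff, hdiag⟩ := h
  -- the two nontrivial POVM elements are nonzero
  have hP0ρ₁ : 0 < (P 0 * ρ₁).trace := by simpa using hdiag 0
  have hP1ρ₂ : 0 < (P 1 * ρ₂).trace := by simpa using hdiag 1
  have hP0ne : P 0 ≠ 0 := by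
    intro h0; rw [h0, Matrix.zero_mul, Matrix.trace_zero] at hP0ρ₁; exact lt_irrefl _ hP0ρ₁
  have hP1ne : P 1 ≠ 0 := by
    intro h0; rw [h0, Matrix.zero_mul, Matrix.trace_zero] at hP1ρ₂; exact lt_irrefl _ hP1ρ₂
  -- zero-trace products are zero
  have h01 : P 0 * ρ₂ = 0 := by
    refine aux_psd_mul_eq_zero (hP 0) h₂ ?_
    simpa using hoff 0 1 (by decide)
  have h10 : P 1 * ρ₁ = 0 := by
    refine aux_psd_mul_eq_zero (hP 1) h₁ ?_
    simpa using hoff 1 0 (by decide)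
  -- density matrices are nonzero
  have hρ₁ne : ρ₁ ≠ 0 := by
    intro h0; rw [h0, Matrix.trace_zero] at t₁; exact one_ne_zero t₁.symm
  have hρ₂ne : ρ₂ ≠ 0 := by
    intro h0; rw [h0, Matrix.trace_zero] at t₂; exact one_ne_zero t₂.symm
  have r1pos : 0 < ρ₁.rank := aux_rank_pos hρ₁ne
  have r2pos : 0 < ρ₂.rank := aux_rank_pos hρ₂ne
  have rP0pos : 0 < (P 0).rank := aux_rank_pos hP0ne
  have rP1pos : 0 < (P 1).rank := aux_rank_pos hP1ne
  have key1 : (P 1).rank + ρ₁.rank ≤ 2 := by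
    simpa using Matrix.rank_add_rank_le_card_of_mul_eq_zero h10
  have key2 : (P 0).rank + ρ₂.rank ≤ 2 := by
    simpa using Matrix.rank_add_rank_le_card_of_mul_eq_zero h01
  omega
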